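/- Let K be a field, P ∈ K[X_1^{±1},…,X_n^{±1}] a nonzero Laurent polynomial, u ∈ ℤ^n \ {0}, and z ∈ K*. If the Laurent binomial X^u − z divides P, then there exist i, j in the support of P and a positive integer k such that k·u = i − j. -/

import Mathlib

/-- Let `K` be a field, `P` a nonzero Laurent polynomial in `n` variables (an element of
the group algebra of `ℤ^n` over `K`), `u ∈ ℤ^n \ {0}` and `z ∈ K*`. If `X^u - z` divides
`P`, then there exist `i, j` in the support of `P` and a positive integer `k` with
`k·u = i - j`. -/
theorem stmt11 (K : Type*) [Field K] (n : ℕ) (P : AddMonoidAlgebra K (Fin n → ℤ))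
    (hP : P ≠ 0) (u : Fin n → ℤ) (hu : u ≠ 0) (z : Kˣ)
    (hdvd : (AddMonoidAlgebra.single u (1 : K) -
        AddMonoidAlgebra.single (0 : Fin n → ℤ) (z : K)) ∣ P) :
    ∃ i ∈ P.coeff.support, ∃ j ∈ P.coeff.support, ∃ k : ℕ, 0 < k ∧ (k : ℤ) • u = i - j := by
  obtain ⟨Q, hPQ⟩ := hdvd
  have hQ : Q ≠ 0 := by
    rintro rfl
    rw [mul_zero] at hPQ
    exact hP hPQ
  -- pick c in the support of P
  obtain ⟨c, hc⟩ : ∃ c, P.coeff c ≠ 0 := by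
    obtain ⟨c, hc⟩ := Finsupp.ne_iff.mp (AddMonoidAlgebra.coeff_eq_zero.not.mpr hP)
    exact ⟨c, by simpa using hc⟩
  -- the line through c in direction u
  set g : ℤ → K := fun m => Q.coeff (c + m • u) with hg
  -- coefficient formula
  have key : ∀ m : ℤ, P.coeff (c + m • u) = g (m - 1) - (z : K) * g m := by
    intro m
    have h1 : (-u + (c + m • u)) = c + (m - 1) • u := by
      rw [sub_smul, one_smul]; abel
    have h2 : (-(0 : Fin n → ℤ) + (c + m • u)) = c + m • u := by simp
    rw [hPQ, sub_mul, AddMonoidAlgebra.coeff_sub, Finsupp.sub_apply, AddMonoidAlgebra.coeff_single_mul_apply,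
      AddMonoidAlgebra.coeff_single_mul_apply, h1, h2, one_mul]
  -- injectivity of the line parametrization
  obtain ⟨i₀, hi₀⟩ : ∃ i, u i ≠ 0 := by
    by_contra h; push_neg at h; exact hu (funext h)
  have hinj : Function.Injective (fun m : ℤ => c + m • u) := by
    intro a b hab
    have : (c + a • u) i₀ = (c + b • u) i₀ := congrFun hab i₀
    simp only [Pi.add_apply, Pi.smul_apply, smul_eq_mul] at this
    have : a * u i₀ = b * u i₀ := by linarith
    exact mul_right_cancel₀ hi₀ this
  -- the support of g is finite, hence bounded
  have hSfin : {m : ℤ | g m ≠ 0}.Finite := by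
    have : {m : ℤ | g m ≠ 0} ⊆ (fun m : ℤ => c + m • u) ⁻¹' ↑Q.coeff.support := by
      intro m hm
      simpa [Finsupp.mem_support_iff, hg] using hm
    exact Set.Finite.subset (Set.Finite.preimage hinj.injOn Q.coeff.support.finite_toSet) this
  obtain ⟨a, ha⟩ := hSfin.bddAbove
  obtain ⟨b, hb⟩ := hSfin.bddBelow
  have hga : ∀ m : ℤ, a < m → g m = 0 := fun m hm => by
    by_contra h; exact absurd (ha h) (not_le.mpr hm)
  have hgb : ∀ m : ℤ, m < b → g m = 0 := fun m hm => by
    by_contra h; exact absurd (hb h) (not_le.mpr hm)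
  -- main argument by contradiction
  by_contra hcon
  push_neg at hcon
  have hz0 : ∀ m : ℤ, m ≠ 0 → P.coeff (c + m • u) = 0 := by
    intro m hm
    by_contra hpm
    have hcmem : c ∈ P.coeff.support := Finsupp.mem_support_iff.mpr hc
    have hmmem : c + m • u ∈ P.coeff.support := Finsupp.mem_support_iff.mpr hpm
    rcases lt_or_gt_of_ne hm with hneg | hpos
    · refine hcon c hcmem (c + m • u) hmmem (-m).toNat (by omega) ?_
      have : ((-m).toNat : ℤ) = -m := Int.toNat_of_nonneg (by omega)
      rw [this, neg_smul]; abel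
    · refine hcon (c + m • u) hmmem c hcmem m.toNat (by omega) ?_
      have : (m.toNat : ℤ) = m := Int.toNat_of_nonneg (by omega)
      rw [this]; abel
  -- the recurrence away from 0
  have rel : ∀ m : ℤ, m ≠ 0 → g (m - 1) = (z : K) * g m := by
    intro m hm
    have := key m
    rw [hz0 m hm] at this
    exact sub_eq_zero.mp this.symm
  -- g vanishes for m ≥ 0
  have fwd : ∀ m : ℤ, 0 ≤ m → ∀ k : ℕ, g m = (z : K) ^ k * g (m + k) := by
    intro m hm k
    induction k with
    | zero => simp
    | succ k ih =>
      have hr := rel (m + k + 1) (by omega)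
      have : m + (k : ℤ) + 1 - 1 = m + k := by ring
      rw [this] at hr
      rw [ih, hr, pow_succ]
      push_cast
      ring_nf
  have gpos : ∀ m : ℤ, 0 ≤ m → g m = 0 := by
    intro m hm
    have hk : ∃ k : ℕ, a < m + k := ⟨(a - m).toNat + 1, by omega⟩
    obtain ⟨k, hk⟩ := hk
    rw [fwd m hm k, hga _ hk, mul_zero]
  -- g vanishes for m ≤ -1
  have bwd : ∀ m : ℤ, m ≤ -1 → ∀ k : ℕ, g m = ((z : K)⁻¹) ^ k * g (m - k) := by
    intro m hm k
    induction k with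
    | zero => simp
    | succ k ih =>
      have hr := rel (m - k) (by omega)
      have hz' : (z : K) ≠ 0 := z.ne_zero
      have : g (m - k) = (z : K)⁻¹ * g (m - k - 1) := by
        rw [hr]; field_simp
      rw [ih, this, pow_succ]
      have : m - (↑(k + 1) : ℤ) = m - k - 1 := by push_cast; ring
      rw [this]
      ring
  have gneg : ∀ m : ℤ, m ≤ -1 → g m = 0 := by
    intro m hm
    have hk : ∃ k : ℕ, m - k < b := ⟨(m - b).toNat + 1, by omega⟩
    obtain ⟨k, hk⟩ := hk
    rw [bwd m hm k, hgb _ hk, mul_zero]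
  -- contradiction at m = 0
  have : P.coeff (c + (0 : ℤ) • u) = 0 := by
    rw [key 0, (by norm_num : (0:ℤ) - 1 = -1), gneg (-1) le_rfl, gpos 0 le_rfl,
      mul_zero, sub_zero]
  rw [zero_smul, add_zero] at this
  exact hc this
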